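/- arXiv:2401.16493 — 3 statements merged into one kernel-verified Lean document; each statement's English description precedes it below -/
import Mathlib

section
/- For every k ≥ 0 and |z| < 1/4, Σ_{n=k}^∞ A_{n,k+1} z^n = z^k C(z)^{2k+1} = C(z)(C(z)-1)^k, where A_{n,k} = ((2k-1)/(2n+1)) binomial(2n+1, n+1-k). -/
noncomputable def catalanGF (z : ℂ) : ℂ := ∑' n : ℕ, (catalan n : ℂ) * z ^ n

noncomputable def catalanTriangleA (n k : ℕ) : ℂ :=
  ((2 * k - 1 : ℂ)) / (2 * n + 1) * ((2 * n + 1).choose (n + 1 - k))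

open Finset

lemma choose_le_two_pow' (N k : ℕ) : N.choose k ≤ 2 ^ N := by
  rcases le_or_gt k N with h | h
  · calc N.choose k ≤ ∑ m ∈ range (N + 1), N.choose m :=
        Finset.single_le_sum (fun i _ => Nat.zero_le _) (mem_range.2 (Nat.lt_succ_of_le h))
      _ = 2 ^ N := Nat.sum_range_choose N
  · simp [Nat.choose_eq_zero_of_lt h]

noncomputable def bC (m n : ℕ) : ℂ :=
  (m : ℂ) / ((2 * n + m : ℕ) : ℂ) * (((2 * n + m).choose n : ℕ) : ℂ)

lemma norm_bC_le (m n : ℕ) : ‖bC m n‖ ≤ 2 ^ m * 4 ^ n := by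
  have h1 : ‖(m : ℂ) / ((2 * n + m : ℕ) : ℂ)‖ ≤ 1 := by
    rw [norm_div, Complex.norm_natCast, Complex.norm_natCast]
    rcases Nat.eq_zero_or_pos (2 * n + m) with h | h
    · simp [Nat.eq_zero_of_add_eq_zero_left h, h]
    · rw [div_le_one (by exact_mod_cast h)]
      exact_mod_cast Nat.le_add_left m (2 * n)
  calc ‖bC m n‖ ≤ 1 * ‖(((2 * n + m).choose n : ℕ) : ℂ)‖ := by
        rw [bC, norm_mul]; gcongr
    _ = ((2 * n + m).choose n : ℝ) := by rw [one_mul, Complex.norm_natCast]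
    _ ≤ ((2 ^ (2 * n + m) : ℕ) : ℝ) := by exact_mod_cast choose_le_two_pow' _ _
    _ = 2 ^ m * 4 ^ n := by push_cast; rw [pow_add, pow_mul]; ring

lemma summable_bC {z : ℂ} (hz : ‖z‖ < 1 / 4) (m : ℕ) :
    Summable fun n => ‖bC m n * z ^ n‖ := by
  have h4 : 4 * ‖z‖ < 1 := by linarith
  have hg : Summable fun n : ℕ => (2:ℝ) ^ m * (4 * ‖z‖) ^ n :=
    (summable_geometric_of_lt_one (by positivity) h4).mul_left _
  refine hg.of_nonneg_of_le (fun n => norm_nonneg _) fun n => ?_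
  rw [norm_mul, norm_pow, mul_pow]
  calc ‖bC m n‖ * ‖z‖ ^ n ≤ (2 ^ m * 4 ^ n) * ‖z‖ ^ n :=
        mul_le_mul_of_nonneg_right (norm_bC_le m n) (pow_nonneg (norm_nonneg z) n)
    _ = 2 ^ m * (4 ^ n * ‖z‖ ^ n) := by ring

lemma choose_two_n_one (n : ℕ) : (2 * n + 1).choose n = (2 * n + 1) * catalan n := by
  have h1 := Nat.add_one_mul_choose_eq (2 * n) n
  rw [Nat.choose_symm_half] at h1
  have h2 := succ_mul_catalan_eq_centralBinom n
  rw [Nat.centralBinom_eq_two_mul_choose] at h2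
  have : (2 * n + 1).choose n * (n + 1) = (2 * n + 1) * catalan n * (n + 1) := by
    rw [← h1, ← h2]; ring
  exact Nat.eq_of_mul_eq_mul_right (Nat.succ_pos n) this

lemma choose_two_n_two (n : ℕ) : (2 * n + 2).choose n = (n + 1) * catalan (n + 1) := by
  have h1 := Nat.choose_succ_right_eq (2 * n + 2) n
  have h2 := succ_mul_catalan_eq_centralBinom (n + 1)
  rw [Nat.centralBinom_eq_two_mul_choose] at h2
  have e1 : 2 * (n + 1) = 2 * n + 2 := by ring
  rw [e1] at h2
  have e2 : 2 * n + 2 - n = n + 2 := by omega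
  rw [e2, ← h2] at h1
  have : (2 * n + 2).choose n * (n + 2) = (n + 1) * catalan (n + 1) * (n + 2) := by
    rw [← h1]; ring
  exact Nat.eq_of_mul_eq_mul_right (by omega) this

lemma bC_one (n : ℕ) : bC 1 n = (catalan n : ℂ) := by
  rw [bC, choose_two_n_one]
  have h : ((2 * n + 1 : ℕ) : ℂ) ≠ 0 := Nat.cast_ne_zero.mpr (by omega)
  rw [Nat.cast_mul, Nat.cast_one, one_div, inv_mul_cancel_left₀ h]

lemma bC_two (n : ℕ) : bC 2 n = (catalan (n + 1) : ℂ) := by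
  rw [bC, choose_two_n_two]
  have h : ((2 * n + 2 : ℕ) : ℂ) ≠ 0 := Nat.cast_ne_zero.mpr (by omega)
  push_cast at h ⊢
  field_simp

lemma bC_zero' (m : ℕ) (hm : m ≠ 0) : bC m 0 = 1 := by
  rw [bC]
  simp only [Nat.mul_zero, Nat.zero_add, Nat.choose_zero_right, Nat.cast_one, mul_one]
  exact div_self (Nat.cast_ne_zero.mpr hm)

lemma bC_rec (M N : ℕ) : bC (M + 2) (N + 1) = bC (M + 1) (N + 1) + bC (M + 3) N := by
  have e1 : 2 * (N + 1) + (M + 2) = 2 * N + M + 4 := by ring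
  have e2 : 2 * (N + 1) + (M + 1) = 2 * N + M + 3 := by ring
  have e3 : 2 * N + (M + 3) = 2 * N + M + 3 := by ring
  rw [bC, bC, bC, e1, e2, e3]
  have pas : (2 * N + M + 4).choose (N + 1)
      = (2 * N + M + 3).choose N + (2 * N + M + 3).choose (N + 1) := by
    rw [Nat.choose_succ_succ (2 * N + M + 3) N]
  have key : ((2 * N + M + 3).choose (N + 1) : ℂ) * (N + 1)
      = ((2 * N + M + 3).choose N : ℂ) * (N + M + 3) := by
    have := Nat.choose_succ_right_eq (2 * N + M + 3) N
    have e : 2 * N + M + 3 - N = N + M + 3 := by omega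
    rw [e] at this
    exact_mod_cast congrArg (Nat.cast : ℕ → ℂ) this
  have h1 : ((2 * N + M + 4 : ℕ) : ℂ) ≠ 0 := Nat.cast_ne_zero.mpr (by omega)
  have h2 : ((2 * N + M + 3 : ℕ) : ℂ) ≠ 0 := Nat.cast_ne_zero.mpr (by omega)
  rw [pas]
  push_cast at key h1 h2 ⊢
  field_simp
  linear_combination (2:ℂ) * key

lemma summable_catalan {z : ℂ} (hz : ‖z‖ < 1 / 4) :
    Summable fun n => ‖(catalan n : ℂ) * z ^ n‖ := by
  have := summable_bC hz 1
  simpa only [bC_one] using this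

lemma gf_sq {z : ℂ} (hz : ‖z‖ < 1 / 4) :
    catalanGF z * catalanGF z = ∑' n, (catalan (n + 1) : ℂ) * z ^ n := by
  have hs := summable_catalan hz
  rw [catalanGF, tsum_mul_tsum_eq_tsum_sum_antidiagonal_of_summable_norm hs hs]
  refine tsum_congr fun n => ?_
  rw [catalan_succ', Nat.cast_sum, Finset.sum_mul]
  refine Finset.sum_congr rfl fun ij hij => ?_
  have h := Finset.HasAntidiagonal.mem_antidiagonal.mp hij
  rw [← h, pow_add, Nat.cast_mul]
  ring

lemma gf_eq {z : ℂ} (hz : ‖z‖ < 1 / 4) :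
    z * catalanGF z ^ 2 = catalanGF z - 1 := by
  have hs : Summable fun n : ℕ => (catalan n : ℂ) * z ^ n := (summable_catalan hz).of_norm
  have h0 := hs.tsum_eq_zero_add
  rw [sq, gf_sq hz, ← tsum_mul_left]
  have : (fun n : ℕ => z * ((catalan (n + 1) : ℂ) * z ^ n))
      = fun n : ℕ => (catalan (n + 1) : ℂ) * z ^ (n + 1) := by
    funext n; rw [pow_succ]; ring
  rw [this]
  rw [catalanGF, h0]
  simp

noncomputable def Fm (m : ℕ) (z : ℂ) : ℂ := ∑' n, bC m n * z ^ n

lemma Fm_one (z : ℂ) : Fm 1 z = catalanGF z := tsum_congr fun n => by rw [bC_one]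

lemma Fm_zero (m : ℕ) (hm : m ≠ 0) : Fm m 0 = 1 := by
  rw [Fm, tsum_eq_single 0 (fun b hb => by simp [zero_pow hb])]
  simp [bC_zero' m hm]

lemma catalanGF_zero : catalanGF 0 = 1 := by
  rw [catalanGF, tsum_eq_single 0 (fun b hb => by simp [zero_pow hb])]
  simp

lemma Fm_two {z : ℂ} (hz : ‖z‖ < 1 / 4) : Fm 2 z = catalanGF z ^ 2 := by
  rcases eq_or_ne z 0 with rfl | h
  · rw [Fm_zero 2 two_ne_zero, catalanGF_zero, one_pow]
  · apply mul_left_cancel₀ h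
    rw [gf_eq hz, Fm, ← tsum_mul_left]
    have : (fun n : ℕ => z * (bC 2 n * z ^ n))
        = fun n : ℕ => (catalan (n + 1) : ℂ) * z ^ (n + 1) := by
      funext n; rw [bC_two, pow_succ]; ring
    rw [this]
    have hs : Summable fun n : ℕ => (catalan n : ℂ) * z ^ n := (summable_catalan hz).of_norm
    rw [catalanGF, hs.tsum_eq_zero_add]
    simp

set_option maxHeartbeats 1000000 in
lemma Fm_rec {z : ℂ} (hz : ‖z‖ < 1 / 4) (M : ℕ) :
    z * Fm (M + 3) z = Fm (M + 2) z - Fm (M + 1) z := by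
  have s1 : Summable fun n : ℕ => bC (M + 1) n * z ^ n := (summable_bC hz _).of_norm
  have s2 : Summable fun n : ℕ => bC (M + 2) n * z ^ n := (summable_bC hz _).of_norm
  have s1' : Summable fun n : ℕ => bC (M + 1) (n + 1) * z ^ (n + 1) :=
    (summable_nat_add_iff 1).mpr s1
  have s2' : Summable fun n : ℕ => bC (M + 2) (n + 1) * z ^ (n + 1) :=
    (summable_nat_add_iff 1).mpr s2
  rw [Fm, Fm, Fm, s2.tsum_eq_zero_add, s1.tsum_eq_zero_add,
    bC_zero' _ (by omega), bC_zero' _ (by omega)]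
  rw [← tsum_mul_left]
  have key : (fun n : ℕ => z * (bC (M + 3) n * z ^ n))
      = fun n : ℕ => bC (M + 2) (n + 1) * z ^ (n + 1) - bC (M + 1) (n + 1) * z ^ (n + 1) := by
    funext n; rw [bC_rec, pow_succ]; ring
  rw [key, Summable.tsum_sub s2' s1']
  ring

lemma Fm_eq_pow {z : ℂ} (hz : ‖z‖ < 1 / 4) :
    ∀ m : ℕ, Fm (m + 1) z = catalanGF z ^ (m + 1) ∧ Fm (m + 2) z = catalanGF z ^ (m + 2) := by
  intro m
  induction m with
  | zero => exact ⟨by rw [Fm_one, pow_one], Fm_two hz⟩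
  | succ m ih =>
    obtain ⟨h1, h2⟩ := ih
    refine ⟨h2, ?_⟩
    rcases eq_or_ne z 0 with rfl | h
    · rw [Fm_zero _ (by omega), catalanGF_zero, one_pow]
    · apply mul_left_cancel₀ h
      rw [show m + 1 + 2 = m + 3 from rfl, Fm_rec hz m, h1, h2]
      have hg := gf_eq hz
      calc catalanGF z ^ (m + 2) - catalanGF z ^ (m + 1)
          = catalanGF z ^ (m + 1) * (catalanGF z - 1) := by ring
        _ = catalanGF z ^ (m + 1) * (z * catalanGF z ^ 2) := by rw [hg]
        _ = z * catalanGF z ^ (m + 3) := by ring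

theorem catalanTriangleA_column_gf (k : ℕ) (z : ℂ) (hz : ‖z‖ < 1 / 4) :
    (∑' n : ℕ, catalanTriangleA (n + k) (k + 1) * z ^ (n + k)) =
        z ^ k * catalanGF z ^ (2 * k + 1) ∧
      z ^ k * catalanGF z ^ (2 * k + 1) = catalanGF z * (catalanGF z - 1) ^ k := by
  constructor
  · have hA : ∀ n : ℕ, catalanTriangleA (n + k) (k + 1) = bC (2 * k + 1) n := by
      intro n
      rw [catalanTriangleA, bC,
        show n + k + 1 - (k + 1) = n from by omega,
        show 2 * (n + k) + 1 = 2 * n + (2 * k + 1) from by ring]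
      push_cast
      ring
    calc (∑' n : ℕ, catalanTriangleA (n + k) (k + 1) * z ^ (n + k))
        = ∑' n : ℕ, (bC (2 * k + 1) n * z ^ n) * z ^ k :=
          tsum_congr fun n => by rw [hA, pow_add]; ring
      _ = (∑' n : ℕ, bC (2 * k + 1) n * z ^ n) * z ^ k := tsum_mul_right
      _ = z ^ k * catalanGF z ^ (2 * k + 1) := by
          rw [← Fm, (Fm_eq_pow hz (2 * k)).1]; ring
  · rw [← gf_eq hz]; ring
end

section
/- For every k ≥ 1, Σ_{n=k}^∞ B_{n,k} / 4^n = 1, where B_{n,k} = (k/n) binomial(2n, n-k). -/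
noncomputable def catalanTriangleB (n k : ℕ) : ℝ :=
  (k : ℝ) / n * ((2 * n).choose (n - k))

open Finset

/-- numerator of the tail function: sum of a window of binomial coefficients -/
def gKnum (K M : ℕ) : ℕ := ∑ j ∈ range (2 * K + 2), (2 * (M + K)).choose (M + j)

noncomputable def gtail (K M : ℕ) : ℝ := (gKnum K M : ℝ) / 4 ^ (M + K)

lemma sum_shift (f : ℕ → ℕ) (n : ℕ) :
    (∑ j ∈ range n, f (j + 1)) + f 0 = (∑ j ∈ range n, f j) + f n := by
  induction n with
  | zero => simp
  | succ n ih => rw [Finset.sum_range_succ, Finset.sum_range_succ]; omega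

lemma gKnum_zero (K : ℕ) : gKnum K 0 = 4 ^ K := by
  unfold gKnum
  simp only [Nat.zero_add, Nat.mul_zero]
  rw [show 2 * K + 2 = (2 * K + 1) + 1 from rfl, Finset.sum_range_succ]
  rw [Nat.choose_eq_zero_of_lt (by omega)]
  rw [Nat.sum_range_choose]
  have : (4:ℕ) ^ K = 2 ^ (2 * K) := by
    rw [pow_mul]; norm_num
  omega

/-- Telescoping identity for the window sums, in ℕ. -/
lemma gKnum_step (K M : ℕ) :
    gKnum K (M + 1) + (2 * (M + K)).choose M
      = 4 * gKnum K M + (2 * (M + K)).choose (M + (2 * K + 2)) := by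
  set m := M + K with hm
  set A : ℕ → ℕ := fun j => (2 * m).choose (M + j) with hA
  set B : ℕ → ℕ := fun j => (2 * m + 1).choose (M + j) with hB
  have step1 : ∀ j, (2 * m + 2).choose (M + 1 + j) = B j + B (j + 1) := by
    intro j
    have : M + 1 + j = (M + j) + 1 := by omega
    rw [this, show 2 * m + 2 = (2 * m + 1) + 1 from rfl, Nat.choose_succ_succ]
    simp [hB, hA]; ring_nf
  have step2 : ∀ j, B (j + 1) = A j + A (j + 1) := by
    intro j
    have : M + (j + 1) = (M + j) + 1 := by omega
    rw [hB]; simp only []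
    rw [this, Nat.choose_succ_succ]
    simp [hA, this]
  have step3 : B 0 = A (2 * K) + A (2 * K + 1) := by
    have hsymm : (2 * m + 1).choose (M + (2 * K + 1)) = (2 * m + 1).choose M := by
      have h1 : M + (2 * K + 1) = (2 * m + 1) - M := by omega
      rw [h1, Nat.choose_symm (by omega)]
    have h0 : B 0 = (2 * m + 1).choose M := by simp [hB]
    rw [h0, ← hsymm]
    have := step2 (2 * K)
    simp only [hB] at this ⊢
    omega
  -- express gKnum K (M+1) via B's
  have hgm1 : gKnum K (M + 1) = (∑ j ∈ range (2 * K + 2), B j) + ∑ j ∈ range (2 * K + 2), B (j + 1) := by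
    unfold gKnum
    rw [show 2 * (M + 1 + K) = 2 * m + 2 from by omega, ← Finset.sum_add_distrib]
    exact Finset.sum_congr rfl fun j _ => step1 j
  have hB1 : ∑ j ∈ range (2 * K + 2), B (j + 1)
      = (∑ j ∈ range (2 * K + 2), A j) + ∑ j ∈ range (2 * K + 2), A (j + 1) := by
    rw [← Finset.sum_add_distrib]
    exact Finset.sum_congr rfl fun j _ => step2 j
  have hSA : gKnum K M = ∑ j ∈ range (2 * K + 2), A j := rfl
  have shiftA := sum_shift A (2 * K + 2)
  have shiftB := sum_shift B (2 * K + 2)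
  have hBn : B (2 * K + 2) = A (2 * K + 1) + A (2 * K + 2) := step2 (2 * K + 1)
  have hA2K : A (2 * K) = A 0 := by
    simp only [hA]
    have h1 : M + 2 * K = 2 * m - M := by omega
    rw [h1, Nat.choose_symm (by omega)]
    simp
  have hgoalA : (2 * (M + K)).choose M = A 0 := by simp [hA, hm]
  have hgoalA' : (2 * (M + K)).choose (M + (2 * K + 2)) = A (2 * K + 2) := rfl
  rw [hgoalA, hgoalA', hgm1, hSA]
  omega

/-- The core binomial identity, in ℕ. -/
lemma core (K M : ℕ) :
    (M + K + 1) * ((2 * (M + K)).choose M)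
      = (K + 1) * ((2 * (M + K) + 2).choose M)
        + (M + K + 1) * ((2 * (M + K)).choose (M + (2 * K + 2))) := by
  match M with
  | 0 =>
    rw [Nat.choose_eq_zero_of_lt (show 2 * (0 + K) < 0 + (2 * K + 2) by omega)]
    simp
  | 1 =>
    rw [Nat.choose_eq_zero_of_lt (show 2 * (1 + K) < 1 + (2 * K + 2) by omega)]
    rw [Nat.choose_one_right, Nat.choose_one_right]
    ring_nf
  | (P + 2) =>
    set m := P + 2 + K with hm
    -- symmetry for the last term
    have hsymm : (2 * m).choose (P + 2 + (2 * K + 2)) = (2 * m).choose P := by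
      have h1 : P + 2 + (2 * K + 2) = 2 * m - P := by omega
      rw [h1, Nat.choose_symm (by omega)]
    rw [hsymm]
    set c0 := (2 * m).choose P with hc0
    set c2 := (2 * m).choose (P + 2) with hc2
    set d := (2 * m + 2).choose (P + 2) with hd
    -- h1 : c2 * ((P+2)*(P+1)) = c0 * ((2m-P)*(2m-P-1))
    have e1 : (2 * m).choose (P + 1) * (P + 1) = c0 * (P + 2 * K + 4) := by
      have := Nat.choose_succ_right_eq (2 * m) P
      rw [show 2 * m - P = P + 2 * K + 4 from by omega] at this
      exact this
    have e2 : c2 * (P + 2) = (2 * m).choose (P + 1) * (P + 2 * K + 3) := by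
      have := Nat.choose_succ_right_eq (2 * m) (P + 1)
      rw [show 2 * m - (P + 1) = P + 2 * K + 3 from by omega] at this
      exact this
    have h1 : c2 * ((P + 2) * (P + 1)) = c0 * ((P + 2 * K + 4) * (P + 2 * K + 3)) := by
      calc c2 * ((P + 2) * (P + 1)) = (c2 * (P + 2)) * (P + 1) := by ring
        _ = ((2 * m).choose (P + 1) * (P + 2 * K + 3)) * (P + 1) := by rw [e2]
        _ = ((2 * m).choose (P + 1) * (P + 1)) * (P + 2 * K + 3) := by ring
        _ = (c0 * (P + 2 * K + 4)) * (P + 2 * K + 3) := by rw [e1]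
        _ = c0 * ((P + 2 * K + 4) * (P + 2 * K + 3)) := by ring
    have f1 : c2 * (2 * m + 1) = (2 * m + 1).choose (P + 2) * (P + 2 * K + 3) := by
      have := Nat.choose_mul_succ_eq (2 * m) (P + 2)
      rw [show 2 * m + 1 - (P + 2) = P + 2 * K + 3 from by omega] at this
      exact this
    have f2 : (2 * m + 1).choose (P + 2) * (2 * m + 2) = d * (P + 2 * K + 4) := by
      have := Nat.choose_mul_succ_eq (2 * m + 1) (P + 2)
      rw [show 2 * m + 1 + 1 - (P + 2) = P + 2 * K + 4 from by omega] at this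
      rw [show 2 * m + 1 + 1 = 2 * m + 2 from rfl] at this
      exact this
    have h2 : d * ((P + 2 * K + 4) * (P + 2 * K + 3)) = c2 * ((2 * m + 1) * (2 * m + 2)) := by
      calc d * ((P + 2 * K + 4) * (P + 2 * K + 3))
          = (d * (P + 2 * K + 4)) * (P + 2 * K + 3) := by ring
        _ = ((2 * m + 1).choose (P + 2) * (2 * m + 2)) * (P + 2 * K + 3) := by rw [f2]
        _ = ((2 * m + 1).choose (P + 2) * (P + 2 * K + 3)) * (2 * m + 2) := by ring
        _ = (c2 * (2 * m + 1)) * (2 * m + 2) := by rw [f1]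
        _ = c2 * ((2 * m + 1) * (2 * m + 2)) := by ring
    -- now multiply goal by Q := (P+2K+4)(P+2K+3) and cancel
    have hQ : 0 < (P + 2 * K + 4) * (P + 2 * K + 3) := by positivity
    apply Nat.eq_of_mul_eq_mul_right hQ
    -- cast to ℤ to use linear_combination
    have h1' : (c2 : ℤ) * ((P + 2) * (P + 1)) = c0 * ((P + 2 * K + 4) * (P + 2 * K + 3)) := by
      exact_mod_cast h1
    have h2' : (d : ℤ) * ((P + 2 * K + 4) * (P + 2 * K + 3)) = c2 * ((2 * m + 1) * (2 * m + 2)) := by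
      exact_mod_cast h2
    have hmz : (m : ℤ) = P + 2 + K := by exact_mod_cast congrArg (Nat.cast : ℕ → ℤ) hm
    have : ((P + 2 + K + 1) * c2 * ((P + 2 * K + 4) * (P + 2 * K + 3)) : ℤ)
        = ((K + 1) * d + (P + 2 + K + 1) * c0) * ((P + 2 * K + 4) * (P + 2 * K + 3)) := by
      rw [hmz] at h2'
      linear_combination (-((K : ℤ) + 1)) * h2' + ((P : ℤ) + 2 + K + 1) * h1'
    exact_mod_cast this

lemma gtail_zero (K : ℕ) : gtail K 0 = 1 := by
  unfold gtail
  rw [gKnum_zero]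
  simp

lemma gtail_step (K M : ℕ) :
    gtail K M = gtail K (M + 1) + catalanTriangleB (M + (K + 1)) (K + 1) / 4 ^ (M + (K + 1)) := by
  have hs : (gKnum K (M + 1) : ℝ) + ((2 * (M + K)).choose M : ℝ)
      = 4 * (gKnum K M : ℝ) + ((2 * (M + K)).choose (M + (2 * K + 2)) : ℝ) := by
    exact_mod_cast gKnum_step K M
  have hc : ((M : ℝ) + K + 1) * ((2 * (M + K)).choose M : ℝ)
      = ((K : ℝ) + 1) * ((2 * (M + K) + 2).choose M : ℝ)
        + ((M : ℝ) + K + 1) * ((2 * (M + K)).choose (M + (2 * K + 2)) : ℝ) := by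
    exact_mod_cast core K M
  unfold gtail catalanTriangleB
  rw [show M + (K + 1) - (K + 1) = M from by omega]
  rw [show 2 * (M + (K + 1)) = 2 * (M + K) + 2 from by omega]
  rw [show M + 1 + K = M + K + 1 from by omega, show M + (K + 1) = M + K + 1 from by omega]
  have h4 : (4 : ℝ) ^ (M + K + 1) = 4 * 4 ^ (M + K) := by rw [pow_succ]; ring
  have h4pos : (0:ℝ) < 4 ^ (M + K) := by positivity
  have hMK : ((M + K + 1 : ℕ) : ℝ) = (M : ℝ) + K + 1 := by push_cast; ring
  have hK1 : ((K + 1 : ℕ) : ℝ) = (K : ℝ) + 1 := by push_cast; ring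
  rw [hMK, hK1, h4]
  have hden : (M : ℝ) + K + 1 ≠ 0 := by positivity
  have key : ((M:ℝ) + K + 1) * (4 * (gKnum K M : ℝ))
      = ((M:ℝ) + K + 1) * (gKnum K (M+1) : ℝ)
        + ((K:ℝ) + 1) * ((2 * (M + K) + 2).choose M : ℝ) := by
    linear_combination (-((M:ℝ) + K + 1)) * hs + hc
  have expand : ((K:ℝ) + 1) / ((M:ℝ) + K + 1) * ((2 * (M + K) + 2).choose M : ℝ)
      = 4 * (gKnum K M : ℝ) - (gKnum K (M+1) : ℝ) := by
    rw [div_mul_eq_mul_div, div_eq_iff hden]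
    linear_combination (-1 : ℝ) * key
  rw [expand]
  field_simp
  ring

lemma cb_sq_bound : ∀ m : ℕ, (m + 1) * Nat.centralBinom m ^ 2 ≤ 4 ^ (2 * m) := by
  intro m
  induction m with
  | zero => simp [Nat.centralBinom]
  | succ m ih =>
    have h := Nat.succ_mul_centralBinom_succ m
    -- (m+1) * cB(m+1) = 2*(2m+1)*cB m
    have key : (m + 1) ^ 2 * ((m + 2) * Nat.centralBinom (m + 1) ^ 2)
        = (m + 2) * (2 * (2 * m + 1)) ^ 2 * Nat.centralBinom m ^ 2 := by
      have : ((m + 1) * Nat.centralBinom (m + 1)) ^ 2 = (2 * (2 * m + 1)) ^ 2 * Nat.centralBinom m ^ 2 := by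
        rw [h]; ring
      nlinarith [this]
    have bound : (m + 2) * (2 * (2 * m + 1)) ^ 2 * Nat.centralBinom m ^ 2
        ≤ (m + 1) ^ 2 * (4 * 4 ^ (2 * m + 1)) := by
      have poly : (m + 2) * (2 * (2 * m + 1)) ^ 2 ≤ (m + 1) ^ 2 * 16 * (m + 1) := by nlinarith
      calc (m + 2) * (2 * (2 * m + 1)) ^ 2 * Nat.centralBinom m ^ 2
          ≤ (m + 1) ^ 2 * 16 * ((m + 1) * Nat.centralBinom m ^ 2) := by nlinarith [Nat.centralBinom_pos m, poly]
        _ ≤ (m + 1) ^ 2 * 16 * 4 ^ (2 * m) := by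
            exact Nat.mul_le_mul_left _ ih
        _ = (m + 1) ^ 2 * (4 * 4 ^ (2 * m + 1)) := by ring
    have : (m + 1) ^ 2 * ((m + 2) * Nat.centralBinom (m + 1) ^ 2)
        ≤ (m + 1) ^ 2 * (4 * 4 ^ (2 * m + 1)) := by rw [key]; exact bound
    have h2 := Nat.le_of_mul_le_mul_left this (by positivity)
    calc (m + 1 + 1) * Nat.centralBinom (m + 1) ^ 2 = (m + 2) * Nat.centralBinom (m + 1) ^ 2 := by ring
      _ ≤ 4 * 4 ^ (2 * m + 1) := h2
      _ = 4 ^ (2 * (m + 1)) := by ring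

lemma cb_div_le (m : ℕ) : (Nat.centralBinom m : ℝ) / 4 ^ m ≤ Real.sqrt (1 / (m + 1)) := by
  have h4 : (0:ℝ) < 4 ^ m := by positivity
  apply Real.le_sqrt_of_sq_le
  rw [div_pow, div_le_div_iff₀ (by positivity) (by positivity)]
  have hb : ((m + 1) * Nat.centralBinom m ^ 2 : ℝ) ≤ ((4 : ℝ) ^ (2 * m)) := by
    exact_mod_cast cb_sq_bound m
  calc (Nat.centralBinom m : ℝ) ^ 2 * ((m : ℝ) + 1) = ((m : ℝ) + 1) * (Nat.centralBinom m : ℝ) ^ 2 := by ring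
    _ ≤ (4 : ℝ) ^ (2 * m) := hb
    _ = ((4 : ℝ) ^ m) ^ 2 := by rw [← pow_mul, mul_comm]
    _ = 1 * ((4 : ℝ) ^ m) ^ 2 := by ring

lemma gtail_nonneg (K M : ℕ) : 0 ≤ gtail K M := by
  unfold gtail; positivity

lemma gtail_le (K M : ℕ) : gtail K M ≤ (2 * K + 2) * Real.sqrt (1 / ((M + K : ℕ) + 1)) := by
  have hnum : (gKnum K M : ℝ) ≤ (2 * K + 2) * (Nat.centralBinom (M + K) : ℝ) := by
    have : gKnum K M ≤ (2 * K + 2) * Nat.centralBinom (M + K) := by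
      unfold gKnum
      calc ∑ j ∈ range (2 * K + 2), (2 * (M + K)).choose (M + j)
          ≤ ∑ _j ∈ range (2 * K + 2), Nat.centralBinom (M + K) :=
            Finset.sum_le_sum fun j _ => Nat.choose_le_centralBinom _ _
        _ = (2 * K + 2) * Nat.centralBinom (M + K) := by
            rw [Finset.sum_const, Finset.card_range]; ring
    exact_mod_cast this
  have h4 : (0:ℝ) < 4 ^ (M + K) := by positivity
  unfold gtail
  calc (gKnum K M : ℝ) / 4 ^ (M + K)
      ≤ (2 * K + 2) * (Nat.centralBinom (M + K) : ℝ) / 4 ^ (M + K) := by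
        gcongr
    _ ≤ (2 * K + 2) * Real.sqrt (1 / ((M + K : ℕ) + 1)) := by
        rw [mul_div_assoc]
        exact mul_le_mul_of_nonneg_left (cb_div_le (M + K)) (by positivity)

lemma gtail_tendsto (K : ℕ) :
    Filter.Tendsto (fun M => gtail K M) Filter.atTop (nhds 0) := by
  apply squeeze_zero (fun M => gtail_nonneg K M) (fun M => gtail_le K M)
  have h1 : Filter.Tendsto (fun M : ℕ => (1 : ℝ) / ((M + K : ℕ) + 1)) Filter.atTop (nhds 0) := by
    exact tendsto_one_div_add_atTop_nhds_zero_nat.comp (Filter.tendsto_add_atTop_nat K)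
  have h2 : Filter.Tendsto (fun M : ℕ => Real.sqrt (1 / ((M + K : ℕ) + 1))) Filter.atTop (nhds 0) := by
    have := (Real.continuous_sqrt.tendsto' 0 0 Real.sqrt_zero).comp h1
    exact this
  have h3 := h2.const_mul ((2 * K + 2 : ℝ))
  simpa using h3

theorem catalanTriangleB_column_sum (k : ℕ) (hk : 1 ≤ k) :
    (∑' n : ℕ, catalanTriangleB (n + k) k / 4 ^ (n + k)) = 1 := by
  obtain ⟨K, rfl⟩ : ∃ K, k = K + 1 := ⟨k - 1, by omega⟩
  have hnonneg : ∀ n : ℕ, 0 ≤ catalanTriangleB (n + (K + 1)) (K + 1) / 4 ^ (n + (K + 1)) := by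
    intro n
    unfold catalanTriangleB
    positivity
  have hpartial : ∀ N : ℕ,
      ∑ n ∈ range N, catalanTriangleB (n + (K + 1)) (K + 1) / 4 ^ (n + (K + 1)) = 1 - gtail K N := by
    intro N
    induction N with
    | zero => simp [gtail_zero]
    | succ N ih =>
      rw [Finset.sum_range_succ, ih, gtail_step K N]
      ring
  have hHasSum : HasSum (fun n : ℕ => catalanTriangleB (n + (K + 1)) (K + 1) / 4 ^ (n + (K + 1))) 1 := by
    rw [hasSum_iff_tendsto_nat_of_nonneg hnonneg]
    simp only [hpartial]
    have : Filter.Tendsto (fun N => 1 - gtail K N) Filter.atTop (nhds (1 - 0)) :=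
      Filter.Tendsto.const_sub 1 (gtail_tendsto K)
    simpa using this
  exact hHasSum.tsum_eq
end

section
/- For each fixed k ≥ 1, B_{n,k} is asymptotically equivalent to (4^n/√π) * k / n^{3/2} as n → ∞; i.e., lim_{n→∞} B_{n,k} * √π * n^{3/2} / (4^n * k) = 1. -/
open Filter Real Stirling Topology Nat

private lemma fact_eq (j : ℕ) (hj : 1 ≤ j) :
    (j ! : ℝ) = stirlingSeq j * (Real.sqrt (2 * j) * ((j : ℝ) / Real.exp 1) ^ j) := by
  have hj0 : (0:ℝ) < j := by exact_mod_cast hj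
  rw [stirlingSeq, div_mul_cancel₀]
  positivity

private lemma stirling_pos (j : ℕ) (hj : 1 ≤ j) : 0 < stirlingSeq j := by
  obtain ⟨i, rfl⟩ : ∃ i, j = i + 1 := ⟨j - 1, by omega⟩
  exact stirlingSeq'_pos i

set_option maxHeartbeats 1000000 in
theorem catalanTriangleB_asymptotic (k : ℕ) (hk : 1 ≤ k) :
    Filter.Tendsto
      (fun n : ℕ =>
        catalanTriangleB n k * Real.sqrt Real.pi * (n : ℝ) ^ ((3 : ℝ) / 2) / (4 ^ n * k))
      Filter.atTop (nhds 1) := by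
  rw [← Filter.tendsto_add_atTop_iff_nat k]
  have hπ : (0:ℝ) < Real.sqrt Real.pi := Real.sqrt_pos.mpr Real.pi_pos
  -- stirling limits
  have hS2 : Tendsto (fun m : ℕ => stirlingSeq (2 * (m + k))) atTop (𝓝 (Real.sqrt Real.pi)) :=
    tendsto_stirlingSeq_sqrt_pi.comp (tendsto_atTop_mono (fun m => by show m ≤ _; omega) tendsto_id)
  have hS3 : Tendsto (fun m : ℕ => stirlingSeq (m + 2 * k)) atTop (𝓝 (Real.sqrt Real.pi)) :=
    tendsto_stirlingSeq_sqrt_pi.comp (tendsto_atTop_mono (fun m => by show m ≤ _; omega) tendsto_id)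
  have hF1 : Tendsto (fun m : ℕ =>
      Real.sqrt Real.pi * stirlingSeq (2 * (m + k)) /
        (stirlingSeq m * stirlingSeq (m + 2 * k))) atTop (𝓝 1) := by
    have h := ((tendsto_const_nhds (x := Real.sqrt Real.pi)).mul hS2).div (tendsto_stirlingSeq_sqrt_pi.mul hS3)
      (by positivity)
    rwa [div_self (by positivity)] at h
  have hF2 : Tendsto (fun m : ℕ =>
      ((m : ℝ) + k) / Real.sqrt ((m : ℝ) * ((m : ℝ) + 2 * k))) atTop (𝓝 1) := by
    have hden : Tendsto (fun m : ℕ => (m : ℝ) * ((m : ℝ) + 2 * k)) atTop atTop :=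
      tendsto_natCast_atTop_atTop.atTop_mul_atTop₀
        (tendsto_atTop_add_const_right _ _ tendsto_natCast_atTop_atTop)
    have hinner : Tendsto (fun m : ℕ => 1 + (k:ℝ)^2 / ((m : ℝ) * ((m : ℝ) + 2 * k)))
        atTop (𝓝 1) := by
      have := (tendsto_const_nhds (x := ((k:ℝ)^2))).div_atTop hden
      simpa using (this.const_add 1)
    have h := (Real.continuous_sqrt.tendsto 1).comp hinner
    rw [Real.sqrt_one] at h
    apply h.congr'
    filter_upwards [eventually_ge_atTop 1] with m hm
    have hm0 : (0:ℝ) < m := by exact_mod_cast hm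
    have hk0 : (0:ℝ) < k := by exact_mod_cast hk
    have hd0 : (0:ℝ) < (m : ℝ) * ((m : ℝ) + 2 * k) := by positivity
    have : (1 + (k:ℝ)^2 / ((m : ℝ) * ((m : ℝ) + 2 * k)))
        = ((m:ℝ) + k)^2 / ((m : ℝ) * ((m : ℝ) + 2 * k)) := by
      field_simp; ring
    simp only [Function.comp]
    rw [this, Real.sqrt_div (by positivity : (0:ℝ) ≤ ((m:ℝ)+k)^2),
      Real.sqrt_sq (by positivity)]
  have hF2' : Tendsto (fun m : ℕ =>
      2 * ((m:ℝ) + k) / (Real.sqrt (2 * (m:ℝ)) * Real.sqrt (2 * ((m:ℝ) + 2*k))))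
      atTop (𝓝 1) := by
    apply hF2.congr'
    filter_upwards [eventually_ge_atTop 1] with m hm
    have hm0 : (0:ℝ) < m := by exact_mod_cast hm
    have hk0 : (0:ℝ) < k := by exact_mod_cast hk
    rw [show Real.sqrt (2 * (m:ℝ)) * Real.sqrt (2 * ((m:ℝ) + 2*k))
        = 2 * Real.sqrt ((m:ℝ) * ((m:ℝ) + 2*k)) by
      rw [← Real.sqrt_mul (by positivity),
        show 2 * (m:ℝ) * (2 * ((m:ℝ) + 2*k)) = 2^2 * ((m:ℝ) * ((m:ℝ)+2*k)) by ring,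
        Real.sqrt_mul (by positivity), Real.sqrt_sq (by norm_num)],
      mul_div_mul_left _ _ (two_ne_zero)]
  have hF3a := Real.tendsto_one_add_div_pow_exp (k : ℝ)
  have hF3b : Tendsto (fun m : ℕ => (1 + -(k:ℝ) / ((m:ℝ) + 2*k)) ^ (m + 2*k)) atTop
      (𝓝 (Real.exp (-(k:ℝ)))) := by
    have h := (tendsto_add_atTop_iff_nat (2*k)).mpr (Real.tendsto_one_add_div_pow_exp (-(k:ℝ)))
    apply h.congr
    intro m
    push_cast
    ring_nf
  have hlim : Tendsto (fun m : ℕ =>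
      (Real.sqrt Real.pi * stirlingSeq (2 * (m + k)) /
        (stirlingSeq m * stirlingSeq (m + 2 * k))) *
      (2 * ((m:ℝ) + k) / (Real.sqrt (2 * (m:ℝ)) * Real.sqrt (2 * ((m:ℝ) + 2*k)))) *
      ((1 + (k:ℝ) / m) ^ m * (1 + -(k:ℝ) / ((m:ℝ) + 2*k)) ^ (m + 2*k))) atTop
      (𝓝 (1 * 1 * (Real.exp (k:ℝ) * Real.exp (-(k:ℝ))))) :=
    (hF1.mul hF2').mul (hF3a.mul hF3b)
  rw [← Real.exp_add, add_neg_cancel, Real.exp_zero, mul_one, mul_one] at hlim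
  apply hlim.congr'
  filter_upwards [eventually_ge_atTop 1] with m hm
  have hm0 : (0:ℝ) < m := by exact_mod_cast hm
  have hk0 : (0:ℝ) < k := by exact_mod_cast hk
  have hmk : (0:ℝ) < (m:ℝ) + k := by linarith
  have hm2k : (0:ℝ) < (m:ℝ) + 2*k := by linarith
  have he : (0:ℝ) < Real.exp 1 := Real.exp_pos 1
  simp only [catalanTriangleB, Nat.add_sub_cancel]
  rw [Nat.cast_choose ℝ (by omega : m ≤ 2*(m+k)),
    show 2*(m+k) - m = m + 2*k from by omega,
    fact_eq (2*(m+k)) (by omega), fact_eq m (by omega), fact_eq (m+2*k) (by omega)]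
  have hr : ((m:ℝ) + k) ^ ((3:ℝ)/2) = ((m:ℝ) + k) * Real.sqrt ((m:ℝ) + k) := by
    rw [show (3:ℝ)/2 = 1 + 1/2 by norm_num, Real.rpow_add hmk, Real.rpow_one,
      ← Real.sqrt_eq_rpow]
  have h4 : Real.sqrt (2 * (2 * ((m:ℝ) + k))) = 2 * Real.sqrt ((m:ℝ) + k) := by
    rw [show 2 * (2 * ((m:ℝ) + k)) = 2^2 * ((m:ℝ)+k) by ring,
      Real.sqrt_mul (by positivity), Real.sqrt_sq (by norm_num)]
  have h6 : ((m:ℝ) + k) = Real.sqrt ((m:ℝ) + k) ^ 2 := (Real.sq_sqrt hmk.le).symm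
  have h7 : (1 + (k:ℝ)/m) = ((m:ℝ)+k)/(m:ℝ) := by field_simp
  have h8 : (1 + -(k:ℝ)/((m:ℝ)+2*k)) = ((m:ℝ)+k)/((m:ℝ)+2*k) := by field_simp; ring
  have hp1 : ((2 * ((m:ℝ) + k)) / Real.exp 1) ^ (2*(m+k))
      = (4:ℝ)^(m+k) * (((m:ℝ)+k)^m * ((m:ℝ)+k)^(m+2*k))
        / (Real.exp 1 ^ m * Real.exp 1 ^ (m+2*k)) := by
    rw [div_pow, mul_pow, show (2:ℝ)^(2*(m+k)) = 4^(m+k) by rw [pow_mul]; norm_num,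
      show 2*(m+k) = m + (m+2*k) from by omega, pow_add, pow_add]
    ring
  push_cast
  rw [hr, h4, hp1, h7, h8, div_pow, div_pow, div_pow, div_pow]
  have hc : Real.sqrt ((m:ℝ) + k) ^ 2 = (m:ℝ) + k := Real.sq_sqrt hmk.le
  have hc0 : Real.sqrt ((m:ℝ) + k) ≠ 0 := by positivity
  have nk : (k:ℝ) ≠ 0 := hk0.ne'
  have nm : (m:ℝ) ≠ 0 := hm0.ne'
  have nmk : (m:ℝ) + k ≠ 0 := hmk.ne'
  have nm2k : (m:ℝ) + 2*k ≠ 0 := hm2k.ne'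
  have nexp : Real.exp 1 ≠ 0 := he.ne'
  have n4 : (4:ℝ) ≠ 0 := by norm_num
  have n2 : Real.sqrt 2 ≠ 0 := by positivity
  have nsqm : Real.sqrt (m:ℝ) ≠ 0 := by positivity
  have nsq2 : Real.sqrt (2*(m:ℝ)) ≠ 0 := by positivity
  have nsq2k : Real.sqrt (2*((m:ℝ) + 2*k)) ≠ 0 := by positivity
  have nsqmk : Real.sqrt ((m:ℝ) * ((m:ℝ) + 2*k)) ≠ 0 := by positivity
  have ns1 : stirlingSeq m ≠ 0 := (stirling_pos m (by omega)).ne'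
  have ns2 : stirlingSeq (m + 2*k) ≠ 0 := (stirling_pos _ (by omega)).ne'
  have ns3 : stirlingSeq (2*(m + k)) ≠ 0 := (stirling_pos _ (by omega)).ne'
  field_simp
  generalize Real.sqrt ((m:ℝ) + (k:ℝ)) = c at hc hc0 ⊢
  rw [← hc]
end
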